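/- Assume q(1) > q(0)·(1 − q(0)). Then there exists p* ∈ (0,1) such that ξ₂(p*) ≥ ξ₂(p) for all p ∈ [0,1), and moreover p* satisfies the critical-point equation ∑_{j=0}^b q(j)·e^{(j+1)·ξ₂(p*)}·( j·(p*)^{j−1} − (j+1)·(p*)^j ) = 0. -/

import Mathlib

open Finset

/-- `Q̃₂(ξ,p) = 1 − e^ξ + (1−p)·e^ξ·∑_{j=0}^b q(j)·p^j·e^{jξ}`, the numerator of the
critical-exponent equation for the algorithm class `𝒜₂`. -/
noncomputable def Qt2 (b : ℕ) (q : ℕ → ℝ) (ξ p : ℝ) : ℝ :=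
  1 - Real.exp ξ + (1 - p) * Real.exp ξ *
    ∑ j ∈ Finset.range (b + 1), q j * p ^ j * Real.exp (j * ξ)

lemma contxi (b : ℕ) (q : ℕ → ℝ) (p : ℝ) : Continuous (fun ξ => Qt2 b q ξ p) := by
  unfold Qt2; fun_prop

lemma contp (b : ℕ) (q : ℕ → ℝ) (ξ : ℝ) : Continuous (fun p => Qt2 b q ξ p) := by
  unfold Qt2; fun_prop

-- sum bound
lemma sum_le_Q (b : ℕ) (q : ℕ → ℝ) (hq : ∀ j, 0 ≤ q j) {p ξ : ℝ} (hp : 0 ≤ p)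
    (h1 : p * Real.exp ξ ≤ 1) :
    ∑ j ∈ Finset.range (b + 1), q j * p ^ j * Real.exp (j * ξ) ≤
      ∑ j ∈ Finset.range (b + 1), q j := by
  apply Finset.sum_le_sum
  intro j _
  have h2 : p ^ j * Real.exp ((j : ℝ) * ξ) = (p * Real.exp ξ) ^ j := by
    rw [mul_pow, ← Real.exp_nat_mul]
  calc q j * p ^ j * Real.exp (j * ξ) = q j * (p * Real.exp ξ) ^ j := by
        rw [mul_assoc, h2]
    _ ≤ q j * 1 := by
        apply mul_le_mul_of_nonneg_left _ (hq j)
        exact pow_le_one₀ (by positivity) h1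
    _ = q j := mul_one _

lemma sum_nonneg' (b : ℕ) (q : ℕ → ℝ) (hq : ∀ j, 0 ≤ q j) {p ξ : ℝ} (hp : 0 ≤ p) :
    0 ≤ ∑ j ∈ Finset.range (b + 1), q j * p ^ j * Real.exp (j * ξ) := by
  apply Finset.sum_nonneg
  intro j _
  exact mul_nonneg (mul_nonneg (hq j) (pow_nonneg hp j)) (Real.exp_pos _).le

lemma neg_of_large (b : ℕ) (q : ℕ → ℝ) (hq : ∀ j, 0 ≤ q j)
    (hqsum : ∑ j ∈ Finset.range (b + 1), q j < 1)
    {p ξ : ℝ} (hp : 0 ≤ p) (hp1 : p ≤ 1) (h1 : p * Real.exp ξ ≤ 1)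
    (hbig : 1 < Real.exp ξ * (1 - ∑ j ∈ Finset.range (b + 1), q j)) :
    Qt2 b q ξ p < 0 := by
  have hS := sum_le_Q b q hq hp h1
  have hS0 := sum_nonneg' b q hq (p := p) (ξ := ξ) hp
  have hQ0 : 0 ≤ ∑ j ∈ Finset.range (b + 1), q j :=
    Finset.sum_nonneg fun j _ => hq j
  have hE : 0 < Real.exp ξ := Real.exp_pos ξ
  unfold Qt2
  nlinarith [mul_le_mul_of_nonneg_left hS (le_of_lt hE),
    mul_nonneg hE.le hS0]

-- positivity at ξ = 0
lemma pos_at_zero (b : ℕ) (q : ℕ → ℝ) (hq : ∀ j, 0 ≤ q j) (hq0 : 0 < q 0)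
    {p : ℝ} (hp : 0 ≤ p) (hp1 : p < 1) : 0 < Qt2 b q 0 p := by
  unfold Qt2
  have h1 : ∀ j ∈ Finset.range (b + 1), q j * p ^ j * Real.exp (j * 0) = q j * p ^ j := by
    intro j _; simp
  rw [Finset.sum_congr rfl h1, Real.exp_zero]
  have h2 : q 0 ≤ ∑ j ∈ Finset.range (b + 1), q j * p ^ j := by
    have := Finset.single_le_sum (f := fun j => q j * p ^ j)
      (fun j _ => mul_nonneg (hq j) (pow_nonneg hp j)) (Finset.mem_range.2 (Nat.succ_pos b))
    simpa using this
  nlinarith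

-- positivity before the root
lemma before_pos (b : ℕ) (q : ℕ → ℝ) (hq : ∀ j, 0 ≤ q j) (hq0 : 0 < q 0)
    {p ξr : ℝ} (hp : 0 ≤ p) (hp1 : p < 1)
    (hre : p * Real.exp ξr < 1)
    (huniq : ∀ ξ : ℝ, 0 < ξ → p * Real.exp ξ < 1 → Qt2 b q ξ p = 0 → ξ = ξr)
    {ξ : ℝ} (h0 : 0 ≤ ξ) (hlt : ξ < ξr) : 0 < Qt2 b q ξ p := by
  by_contra h
  push_neg at h
  have hpos0 := pos_at_zero b q hq hq0 hp hp1
  have hcont := (contxi b q p).continuousOn (s := Set.Icc 0 ξ)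
  have hmem : (0:ℝ) ∈ Set.Icc (Qt2 b q ξ p) (Qt2 b q 0 p) := ⟨h, hpos0.le⟩
  obtain ⟨ξ', hξ'I, hξ'root⟩ := intermediate_value_Icc' h0 hcont hmem
  have hξ'pos : 0 < ξ' := by
    rcases lt_or_eq_of_le hξ'I.1 with h' | h'
    · exact h'
    · exfalso
      simp only at hξ'root
      rw [← h'] at hξ'root
      rw [hξ'root] at hpos0
      exact lt_irrefl _ hpos0
  have hξ'e : p * Real.exp ξ' < 1 := by
    have : Real.exp ξ' ≤ Real.exp ξr := Real.exp_le_exp.2 (le_of_lt (lt_of_le_of_lt hξ'I.2 hlt))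
    nlinarith [Real.exp_pos ξ']
  have heq := huniq ξ' hξ'pos hξ'e hξ'root
  have hlt' : ξ' < ξr := lt_of_le_of_lt hξ'I.2 hlt
  rw [heq] at hlt'
  exact lt_irrefl _ hlt'

-- value at ξ = log p⁻¹ (for 0 < p < 1)
lemma neg_at_top (b : ℕ) (q : ℕ → ℝ) (hq : ∀ j, 0 ≤ q j)
    (hqsum : ∑ j ∈ Finset.range (b + 1), q j < 1)
    {p : ℝ} (hp : 0 < p) (hp1 : p < 1) :
    Qt2 b q (Real.log p⁻¹) p < 0 := by
  have hpinv : (0:ℝ) < p⁻¹ := by positivity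
  have hexp : Real.exp (Real.log p⁻¹) = p⁻¹ := Real.exp_log hpinv
  unfold Qt2
  rw [hexp]
  have h1 : ∀ j ∈ Finset.range (b + 1),
      q j * p ^ j * Real.exp (j * Real.log p⁻¹) = q j := by
    intro j _
    rw [Real.exp_nat_mul, hexp, mul_assoc, ← mul_pow, mul_inv_cancel₀ (ne_of_gt hp), one_pow, mul_one]
  rw [Finset.sum_congr rfl h1]
  have hQ0 : 0 ≤ ∑ j ∈ Finset.range (b + 1), q j := Finset.sum_nonneg fun j _ => hq j
  have hpp : p * p⁻¹ = 1 := mul_inv_cancel₀ (ne_of_gt hp)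
  nlinarith [mul_pos (mul_pos (show (0:ℝ) < 1 - p by linarith) hpinv)
    (show (0:ℝ) < 1 - ∑ j ∈ Finset.range (b + 1), q j by linarith)]

-- negativity after the root
lemma after_neg (b : ℕ) (q : ℕ → ℝ) (hq : ∀ j, 0 ≤ q j)
    (hqsum : ∑ j ∈ Finset.range (b + 1), q j < 1)
    {p ξr : ℝ} (hp : 0 ≤ p) (hp1 : p < 1) (hr0 : 0 < ξr)
    (huniq : ∀ ξ : ℝ, 0 < ξ → p * Real.exp ξ < 1 → Qt2 b q ξ p = 0 → ξ = ξr)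
    {ξ : ℝ} (hgt : ξr < ξ) (hpe : p * Real.exp ξ < 1) : Qt2 b q ξ p < 0 := by
  by_contra h
  push_neg at h
  -- find ξ̂ > ξ with p * exp ξ̂ < 1 and Qt2 ξ̂ p < 0
  obtain ⟨ξh, hξh_gt, hξh_e, hξh_neg⟩ :
      ∃ ξh : ℝ, ξ < ξh ∧ p * Real.exp ξh < 1 ∧ Qt2 b q ξh p < 0 := by
    rcases eq_or_lt_of_le hp with hp0 | hp0
    · -- p = 0
      refine ⟨max ξ (Real.log (2 / (1 - ∑ j ∈ Finset.range (b + 1), q j))) + 1,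
        by simp [lt_add_of_le_of_pos (le_max_left _ _)], ?_, ?_⟩
      · rw [← hp0]; simpa using Real.exp_pos _
      · apply neg_of_large b q hq hqsum hp hp1.le
        · rw [← hp0]; simpa using (Real.exp_pos _).le
        · have hd : (0:ℝ) < 2 / (1 - ∑ j ∈ Finset.range (b + 1), q j) := by
            apply div_pos (by norm_num); linarith
          have h2 : Real.log (2 / (1 - ∑ j ∈ Finset.range (b + 1), q j)) ≤
              max ξ (Real.log (2 / (1 - ∑ j ∈ Finset.range (b + 1), q j))) + 1 := by
            have := le_max_right ξ (Real.log (2 / (1 - ∑ j ∈ Finset.range (b + 1), q j)))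
            linarith
          have h3 : 2 / (1 - ∑ j ∈ Finset.range (b + 1), q j) ≤ Real.exp (max ξ
              (Real.log (2 / (1 - ∑ j ∈ Finset.range (b + 1), q j))) + 1) := by
            calc 2 / (1 - ∑ j ∈ Finset.range (b + 1), q j)
                = Real.exp (Real.log (2 / (1 - ∑ j ∈ Finset.range (b + 1), q j))) :=
                  (Real.exp_log hd).symm
              _ ≤ _ := Real.exp_le_exp.2 h2
          rw [div_le_iff₀ (by linarith)] at h3
          nlinarith
    · -- 0 < p
      set ξL := Real.log p⁻¹ with hξL
      have hneg := neg_at_top b q hq hqsum hp0 hp1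
      have hcont := contxi b q p
      have hopen : IsOpen {t : ℝ | Qt2 b q t p < 0} := isOpen_lt hcont continuous_const
      obtain ⟨ε, hε, hball⟩ := Metric.isOpen_iff.1 hopen ξL hneg
      have hpinv : (0:ℝ) < p⁻¹ := by positivity
      have hpp : p * p⁻¹ = 1 := mul_inv_cancel₀ (ne_of_gt hp0)
      have hexpL : Real.exp ξL = p⁻¹ := Real.exp_log hpinv
      have h1 : Real.exp ξ < p⁻¹ := by
        nlinarith [mul_pos (sub_pos.2 hpe) hpinv]
      have hξlt : ξ < ξL := (Real.lt_log_iff_exp_lt hpinv).2 h1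
      set m := max ξ (ξL - ε) with hm_def
      have hm : m < ξL := max_lt hξlt (by linarith)
      refine ⟨(m + ξL) / 2, ?_, ?_, ?_⟩
      · have := le_max_left ξ (ξL - ε); simp only [← hm_def] at this; linarith
      · have : Real.exp ((m + ξL) / 2) < Real.exp ξL := Real.exp_lt_exp.2 (by linarith)
        rw [hexpL] at this
        nlinarith
      · apply hball
        rw [Metric.mem_ball, Real.dist_eq, abs_lt]
        have := le_max_right ξ (ξL - ε)
        simp only [← hm_def] at this
        constructor <;> linarith
  -- intermediate value between ξ and ξh
  have hcont := (contxi b q p).continuousOn (s := Set.Icc ξ ξh)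
  have hmem : (0:ℝ) ∈ Set.Icc (Qt2 b q ξh p) (Qt2 b q ξ p) := ⟨hξh_neg.le, h⟩
  obtain ⟨ξ', hξ'I, hξ'root⟩ := intermediate_value_Icc' hξh_gt.le hcont hmem
  have hξ'pos : 0 < ξ' := lt_of_lt_of_le (lt_trans hr0 hgt) hξ'I.1
  have hξ'e : p * Real.exp ξ' < 1 := by
    have : Real.exp ξ' ≤ Real.exp ξh := Real.exp_le_exp.2 hξ'I.2
    nlinarith [Real.exp_pos ξ']
  have heq := huniq ξ' hξ'pos hξ'e hξ'root
  have : ξr < ξ' := lt_of_lt_of_le hgt hξ'I.1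
  rw [heq] at this
  exact lt_irrefl _ this

lemma xi2_cont (b : ℕ) (q : ℕ → ℝ) (hq : ∀ j, 0 ≤ q j) (hq0 : 0 < q 0)
    (hqsum : ∑ j ∈ Finset.range (b + 1), q j < 1)
    (ξ₂ : ℝ → ℝ)
    (hξ₂ : ∀ p ∈ Set.Ico (0 : ℝ) 1,
      (0 < ξ₂ p ∧ p * Real.exp (ξ₂ p) < 1 ∧ Qt2 b q (ξ₂ p) p = 0) ∧
      ∀ ξ : ℝ, 0 < ξ → p * Real.exp ξ < 1 → Qt2 b q ξ p = 0 → ξ = ξ₂ p) :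
    ContinuousOn ξ₂ (Set.Ico 0 1) := by
  rw [Metric.continuousOn_iff]
  intro p₀ hp₀ ε hε
  obtain ⟨⟨hr0, hre, hroot⟩, huniq⟩ := hξ₂ p₀ hp₀
  -- a radius around ξ₂ p₀ staying in {t | p₀ * exp t < 1}
  have hopen : IsOpen {t : ℝ | p₀ * Real.exp t < 1} :=
    isOpen_lt (by fun_prop) continuous_const
  obtain ⟨r, hr, hball⟩ := Metric.isOpen_iff.1 hopen (ξ₂ p₀) hre
  set η := min ε (min r (ξ₂ p₀)) / 2 with hη_def
  have hηpos : 0 < η := by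
    apply div_pos _ (by norm_num)
    exact lt_min hε (lt_min hr hr0)
  have hηε : η ≤ ε / 2 := by
    apply div_le_div_of_nonneg_right _ (by norm_num)
    exact min_le_left _ _
  have hηr : η < r := by
    have : min ε (min r (ξ₂ p₀)) ≤ r := le_trans (min_le_right _ _) (min_le_left _ _)
    linarith
  have hηξ : η < ξ₂ p₀ := by
    have : min ε (min r (ξ₂ p₀)) ≤ ξ₂ p₀ := le_trans (min_le_right _ _) (min_le_right _ _)
    linarith
  set a := ξ₂ p₀ - η with ha_def
  set c := ξ₂ p₀ + η with hc_def
  have ha0 : 0 < a := by simp only [ha_def]; linarith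
  have hc_mem : p₀ * Real.exp c < 1 := by
    apply hball
    rw [Metric.mem_ball, Real.dist_eq, abs_lt]
    constructor <;> simp only [hc_def] <;> linarith
  have hfa : 0 < Qt2 b q a p₀ :=
    before_pos b q hq hq0 hp₀.1 hp₀.2 hre huniq ha0.le (by simp only [ha_def]; linarith)
  have hfc : Qt2 b q c p₀ < 0 :=
    after_neg b q hq hqsum hp₀.1 hp₀.2 hr0 huniq (by simp only [hc_def]; linarith) hc_mem
  -- sets where the signs persist
  have hW : IsOpen {p : ℝ | 0 < Qt2 b q a p ∧ Qt2 b q c p < 0 ∧ p * Real.exp c < 1} := by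
    have h1 : {p : ℝ | 0 < Qt2 b q a p ∧ Qt2 b q c p < 0 ∧ p * Real.exp c < 1} =
        {p : ℝ | 0 < Qt2 b q a p} ∩ ({p : ℝ | Qt2 b q c p < 0} ∩
          {p : ℝ | p * Real.exp c < 1}) := rfl
    rw [h1]
    exact (isOpen_lt continuous_const (contp b q a)).inter
      ((isOpen_lt (contp b q c) continuous_const).inter
        (isOpen_lt (by fun_prop) continuous_const))
  have hp₀W : p₀ ∈ {p : ℝ | 0 < Qt2 b q a p ∧ Qt2 b q c p < 0 ∧ p * Real.exp c < 1} :=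
    ⟨hfa, hfc, hc_mem⟩
  obtain ⟨δ, hδ, hδball⟩ := Metric.isOpen_iff.1 hW p₀ hp₀W
  refine ⟨δ, hδ, fun p hp hdist => ?_⟩
  obtain ⟨hpa, hpc, hpe⟩ := hδball (Metric.mem_ball.2 hdist)
  obtain ⟨⟨hr0', hre', hroot'⟩, huniq'⟩ := hξ₂ p hp
  -- IVT for p on [a, c]
  have hcont := (contxi b q p).continuousOn (s := Set.Icc a c)
  have hmem : (0:ℝ) ∈ Set.Icc (Qt2 b q c p) (Qt2 b q a p) := ⟨hpc.le, hpa.le⟩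
  obtain ⟨ξ', hξ'I, hξ'root⟩ := intermediate_value_Icc' (by linarith) hcont hmem
  have hξ'pos : 0 < ξ' := lt_of_lt_of_le ha0 hξ'I.1
  have hξ'e : p * Real.exp ξ' < 1 := by
    have : Real.exp ξ' ≤ Real.exp c := Real.exp_le_exp.2 hξ'I.2
    nlinarith [Real.exp_pos ξ', hp.1]
  have heq := huniq' ξ' hξ'pos hξ'e hξ'root
  rw [heq] at hξ'I
  rw [Real.dist_eq, abs_lt]
  constructor <;> [skip; skip] <;>
    · simp only [ha_def, hc_def] at hξ'I
      have h1 := hξ'I.1; have h2 := hξ'I.2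
      linarith


set_option maxHeartbeats 1000000

/-- If `q(1) > q(0)·(1 − q(0))`, there is `p* ∈ (0,1)` maximizing `ξ₂` over `[0,1)`,
and `p*` satisfies the critical-point equation
`∑_{j=0}^b q(j)·e^{(j+1)·ξ₂(p*)}·(j·(p*)^{j−1} − (j+1)·(p*)^j) = 0`. -/
theorem stmt_11 (b : ℕ) (q : ℕ → ℝ)
    (hq : ∀ j, 0 ≤ q j) (hqb : ∀ j, b < j → q j = 0) (hq0 : 0 < q 0)
    (hqsum : ∑ j ∈ Finset.range (b + 1), q j < 1)
    (ξ₂ : ℝ → ℝ)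
    (hξ₂ : ∀ p ∈ Set.Ico (0 : ℝ) 1,
      (0 < ξ₂ p ∧ p * Real.exp (ξ₂ p) < 1 ∧ Qt2 b q (ξ₂ p) p = 0) ∧
      ∀ ξ : ℝ, 0 < ξ → p * Real.exp ξ < 1 → Qt2 b q ξ p = 0 → ξ = ξ₂ p)
    (hcrit : q 0 * (1 - q 0) < q 1) :
    ∃ pstar ∈ Set.Ioo (0 : ℝ) 1, (∀ p ∈ Set.Ico (0 : ℝ) 1, ξ₂ p ≤ ξ₂ pstar) ∧
      ∑ j ∈ Finset.range (b + 1), q j * Real.exp ((j + 1) * ξ₂ pstar) *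
        ((j : ℝ) * pstar ^ (j - 1) - ((j : ℝ) + 1) * pstar ^ j) = 0 := by

  -- data at p = 0
  obtain ⟨⟨hr00, hre0, hroot0⟩, huniq0⟩ := hξ₂ 0 ⟨le_refl 0, zero_lt_one⟩
  set E := Real.exp (ξ₂ 0) with hE_def
  have hE0 : 0 < E := Real.exp_pos _
  have hE1 : 1 < E := by
    rw [hE_def, show (1:ℝ) = Real.exp 0 from Real.exp_zero.symm]
    exact Real.exp_lt_exp.2 hr00
  have hsum0 : ∑ j ∈ Finset.range (b + 1), q j * (0:ℝ) ^ j * Real.exp (j * ξ₂ 0) = q 0 := by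
    rw [Finset.sum_eq_single_of_mem 0 (Finset.mem_range.2 (Nat.succ_pos b))]
    · simp
    · intro j _ hj; simp [zero_pow hj]
  have hErel : E * (1 - q 0) = 1 := by
    have := hroot0
    unfold Qt2 at this
    rw [hsum0] at this
    rw [hE_def]
    linarith [this]
  have hq01 : q 0 < 1 := by nlinarith
  -- b ≥ 1 (else hcrit is contradictory)
  have hb1 : 1 ≤ b := by
    by_contra hb
    push_neg at hb
    interval_cases b
    have h1 : q 1 = 0 := hqb 1 (by norm_num)
    have h2 : q 0 < 1 := by simpa using hqsum
    nlinarith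
  have hq1pos : 0 < q 1 := by nlinarith
  have hq1E : q 0 < q 1 * E := by
    nlinarith [mul_pos hE0 (sub_pos.2 hcrit)]
  -- a small p where ξ₂ exceeds ξ₂ 0
  set ps := min ((q 1 * E - q 0) / (2 * (q 1 * E))) (1 / (2 * E)) with hps_def
  have hps0 : 0 < ps := lt_min (div_pos (by linarith) (by positivity)) (by positivity)
  have hpsE : ps * E ≤ 1 / 2 := by
    have h := min_le_right ((q 1 * E - q 0) / (2 * (q 1 * E))) (1 / (2 * E))
    rw [← hps_def, le_div_iff₀ (by positivity)] at h
    nlinarith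
  have hps1 : ps < 1 := by nlinarith
  have hps2 : ps * (2 * (q 1 * E)) ≤ q 1 * E - q 0 := by
    have h := min_le_left ((q 1 * E - q 0) / (2 * (q 1 * E))) (1 / (2 * E))
    rw [← hps_def, le_div_iff₀ (by positivity)] at h
    exact h
  have hpsmall : 0 < q 1 * E - q 0 - q 1 * (ps * E) := by nlinarith
  have hQt_ps : 0 < Qt2 b q (ξ₂ 0) ps := by
    have hsub : ({0, 1} : Finset ℕ) ⊆ Finset.range (b + 1) := by
      intro x hx
      simp only [Finset.mem_insert, Finset.mem_singleton] at hx
      rcases hx with rfl | rfl <;> (rw [Finset.mem_range]; omega)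
    have h01 : ∑ j ∈ ({0, 1} : Finset ℕ), q j * ps ^ j * Real.exp (j * ξ₂ 0) =
        q 0 + q 1 * (ps * E) := by
      rw [Finset.sum_insert (by norm_num), Finset.sum_singleton]
      rw [hE_def]
      push_cast
      simp [Real.exp_zero]
      ring
    have hlow : q 0 + q 1 * (ps * E) ≤
        ∑ j ∈ Finset.range (b + 1), q j * ps ^ j * Real.exp (j * ξ₂ 0) := by
      rw [← h01]
      apply Finset.sum_le_sum_of_subset_of_nonneg hsub
      intro j _ _
      exact mul_nonneg (mul_nonneg (hq j) (pow_nonneg hps0.le j)) (Real.exp_pos _).le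
    unfold Qt2
    rw [← hE_def]
    nlinarith [mul_le_mul_of_nonneg_left hlow
        (mul_nonneg (show (0:ℝ) ≤ 1 - ps by linarith) hE0.le),
      mul_pos (mul_pos hps0 hE0) hpsmall]
  have hpsmem : ps ∈ Set.Ico (0:ℝ) 1 := ⟨hps0.le, hps1⟩
  obtain ⟨⟨hr0s, hres, hroots⟩, huniqs⟩ := hξ₂ ps hpsmem
  have hsmall : ξ₂ 0 < ξ₂ ps := by
    by_contra hle
    push_neg at hle
    rcases eq_or_lt_of_le hle with heq | hlt
    · rw [← heq, hroots] at hQt_ps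
      exact lt_irrefl 0 hQt_ps
    · have := after_neg b q hq hqsum hps0.le hps1 hr0s huniqs hlt
        (by rw [← hE_def]; nlinarith)
      linarith
  -- the tail p ≥ p₁ has small ξ₂
  set p₁ := E⁻¹ with hp₁_def
  have hp₁0 : 0 < p₁ := by positivity
  have hp₁1 : p₁ < 1 := by
    rw [hp₁_def, inv_lt_one_iff₀]
    right; exact hE1
  have hp₁E : p₁ * E = 1 := by
    rw [hp₁_def]; field_simp
  have htail : ∀ p ∈ Set.Ico (0:ℝ) 1, p₁ < p → ξ₂ p < ξ₂ 0 := by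
    intro p hp hpp
    obtain ⟨⟨hr0p, hrep, hrootp⟩, _⟩ := hξ₂ p hp
    have hppos : 0 < p := lt_trans hp₁0 hpp
    have hX0 : 0 < Real.exp (ξ₂ p) := Real.exp_pos _
    have ha : Real.exp (ξ₂ p) * E⁻¹ < Real.exp (ξ₂ p) * p :=
      mul_lt_mul_of_pos_left hpp hX0
    have hb2 : Real.exp (ξ₂ p) * p < 1 := by rw [mul_comm]; exact hrep
    have hc2 : Real.exp (ξ₂ p) * E⁻¹ * E < 1 * E :=
      mul_lt_mul_of_pos_right (lt_trans ha hb2) hE0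
    rw [mul_assoc, inv_mul_cancel₀ (ne_of_gt hE0), mul_one, one_mul] at hc2
    rw [hE_def] at hc2
    exact Real.exp_lt_exp.1 hc2
  -- maximize over [0, p₁]
  have hsubset : Set.Icc (0:ℝ) p₁ ⊆ Set.Ico 0 1 :=
    fun x hx => ⟨hx.1, lt_of_le_of_lt hx.2 hp₁1⟩
  have hcont := (xi2_cont b q hq hq0 hqsum ξ₂ hξ₂).mono hsubset
  obtain ⟨pstar, hpstarI, hmax'⟩ :=
    isCompact_Icc.exists_isMaxOn (Set.nonempty_Icc.2 hp₁0.le) hcont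
  have hmax : ∀ p ∈ Set.Icc (0:ℝ) p₁, ξ₂ p ≤ ξ₂ pstar := fun p hp => hmax' hp
  have hps_le_p₁ : ps ≤ p₁ := by
    have h2 : ps * E ≤ p₁ * E := by rw [hp₁E]; linarith
    exact le_of_mul_le_mul_right h2 hE0
  have hglobal : ∀ p ∈ Set.Ico (0:ℝ) 1, ξ₂ p ≤ ξ₂ pstar := by
    intro p hp
    rcases le_or_gt p p₁ with h | h
    · exact hmax p ⟨hp.1, h⟩
    · have h1 := htail p hp h
      have h2 := hmax 0 ⟨le_refl 0, hp₁0.le⟩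
      linarith
  have hpstar_pos : 0 < pstar := by
    rcases eq_or_lt_of_le hpstarI.1 with heq | hlt
    · exfalso
      have h1 := hmax ps ⟨hps0.le, hps_le_p₁⟩
      rw [← heq] at h1
      linarith
    · exact hlt
  have hpstar1 : pstar < 1 := lt_of_le_of_lt hpstarI.2 hp₁1
  obtain ⟨⟨hr0m, hrem, hrootm⟩, huniqm⟩ := hξ₂ pstar ⟨hpstar_pos.le, hpstar1⟩
  set ξs := ξ₂ pstar with hξs_def
  -- local maximality of p ↦ Qt2 ξs p at pstar
  have hloc : IsLocalMax (fun p => Qt2 b q ξs p) pstar := by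
    have hUopen : IsOpen {p : ℝ | 0 < p ∧ p < 1 ∧ p * Real.exp ξs < 1} := by
      have h1 : {p : ℝ | 0 < p ∧ p < 1 ∧ p * Real.exp ξs < 1} =
          {p : ℝ | 0 < p} ∩ ({p : ℝ | p < 1} ∩ {p : ℝ | p * Real.exp ξs < 1}) := rfl
      rw [h1]
      exact (isOpen_lt continuous_const continuous_id).inter
        ((isOpen_lt continuous_id continuous_const).inter
          (isOpen_lt (by fun_prop) continuous_const))
    have hnhds : {p : ℝ | 0 < p ∧ p < 1 ∧ p * Real.exp ξs < 1} ∈ nhds pstar :=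
      hUopen.mem_nhds ⟨hpstar_pos, hpstar1, hrem⟩
    refine Filter.eventually_of_mem hnhds fun p hp => ?_
    obtain ⟨hp0, hp1, hpe⟩ := hp
    simp only
    rw [hrootm]
    obtain ⟨⟨hr0p, hrep, hrootp⟩, huniqp⟩ := hξ₂ p ⟨hp0.le, hp1⟩
    rcases eq_or_lt_of_le (hglobal p ⟨hp0.le, hp1⟩) with heq | hlt
    · rw [← heq]; exact le_of_eq hrootp
    · exact (after_neg b q hq hqsum hp0.le hp1 hr0p huniqp hlt hpe).le
  -- derivative of p ↦ Qt2 ξs p at pstar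
  have hS' : HasDerivAt
      (fun p => ∑ j ∈ Finset.range (b + 1), q j * p ^ j * Real.exp (j * ξs))
      (∑ j ∈ Finset.range (b + 1), q j * ((j:ℝ) * pstar ^ (j - 1)) * Real.exp (j * ξs))
      pstar := by
    apply HasDerivAt.fun_sum
    intro j _
    exact ((hasDerivAt_pow j pstar).const_mul (q j)).mul_const _
  have hlin : HasDerivAt (fun p : ℝ => (1 - p) * Real.exp ξs) (-Real.exp ξs) pstar := by
    have h := ((hasDerivAt_id pstar).const_sub 1).mul_const (Real.exp ξs)
    rw [show -Real.exp ξs = -1 * Real.exp ξs by ring]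
    exact h
  have hprod := hlin.mul hS'
  have hQd := hprod.const_add (1 - Real.exp ξs)
  have hderiv_eq :
      -Real.exp ξs * (∑ j ∈ Finset.range (b + 1), q j * pstar ^ j * Real.exp (j * ξs)) +
        (1 - pstar) * Real.exp ξs *
          (∑ j ∈ Finset.range (b + 1), q j * ((j:ℝ) * pstar ^ (j - 1)) * Real.exp (j * ξs)) =
      ∑ j ∈ Finset.range (b + 1), q j * Real.exp ((j + 1) * ξs) *
        ((j : ℝ) * pstar ^ (j - 1) - ((j : ℝ) + 1) * pstar ^ j) := by
    rw [Finset.mul_sum, Finset.mul_sum, ← Finset.sum_add_distrib]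
    apply Finset.sum_congr rfl
    intro j _
    have hexp : Real.exp (((j:ℝ) + 1) * ξs) = Real.exp ((j:ℝ) * ξs) * Real.exp ξs := by
      rw [← Real.exp_add]; ring_nf
    cases j with
    | zero =>
      push_cast
      simp [Real.exp_zero]
      ring
    | succ n =>
      push_cast
      have h2 : Real.exp (((n:ℝ) + 1 + 1) * ξs) =
          Real.exp (((n:ℝ) + 1) * ξs) * Real.exp ξs := by
        rw [← Real.exp_add]; ring_nf
      rw [h2]
      ring
  have hQfinal : HasDerivAt (fun p => Qt2 b q ξs p)
      (∑ j ∈ Finset.range (b + 1), q j * Real.exp ((j + 1) * ξs) *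
        ((j : ℝ) * pstar ^ (j - 1) - ((j : ℝ) + 1) * pstar ^ j)) pstar := by
    rw [← hderiv_eq]
    exact hQd
  have hfin := hloc.hasDerivAt_eq_zero hQfinal
  exact ⟨pstar, ⟨hpstar_pos, hpstar1⟩, hglobal, hfin⟩
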